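/- Let C be a triangulated category with adjacent weight structure w and t-structure t, m ≤ n, and M an object. Fix a weight decomposition morphism M → w_{≥m}M and form R := t_{≤n}(w_{≥m}M) with the composite h : M → R; complete h to a distinguished triangle L → M → R → L[1]. Then L is an extension of t_{≥n+1}(w_{≥m}M) by w_{≤m-1}M, so L is without weights m,...,n, and R ∈ C[m,n]. -/

import Mathlib

open CategoryTheory CategoryTheory.Limits CategoryTheory.Pretriangulated Opposite

universe v u

variable (C : Type u) [Category.{v} C] [Preadditive C] [HasZeroObject C]
  [HasShift C ℤ] [∀ n : ℤ, (shiftFunctor C n).Additive] [Pretriangulated C]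

/-- A weight structure on the triangulated category `C`. -/
structure WeightStructure where
  /-- the class `C_{w ≤ n}` -/
  le : ℤ → Set C
  /-- the class `C_{w ≥ n}` -/
  ge : ℤ → Set C
  le_iso_closed : ∀ (n : ℤ) (X Y : C), (X ≅ Y) → X ∈ le n → Y ∈ le n
  ge_iso_closed : ∀ (n : ℤ) (X Y : C), (X ≅ Y) → X ∈ ge n → Y ∈ ge n
  le_retract : ∀ (n : ℤ) (X Y : C) (a : X ⟶ Y) (b : Y ⟶ X),
    a ≫ b = 𝟙 X → Y ∈ le n → X ∈ le n
  ge_retract : ∀ (n : ℤ) (X Y : C) (a : X ⟶ Y) (b : Y ⟶ X),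
    a ≫ b = 𝟙 X → Y ∈ ge n → X ∈ ge n
  le_shift : ∀ (n k : ℤ) (X : C), X ∈ le n → X⟦k⟧ ∈ le (n + k)
  ge_shift : ∀ (n k : ℤ) (X : C), X ∈ ge n → X⟦k⟧ ∈ ge (n + k)
  le_mono : ∀ n : ℤ, le n ⊆ le (n + 1)
  ge_anti : ∀ n : ℤ, ge (n + 1) ⊆ ge n
  orth : ∀ (n : ℤ) (X Y : C), X ∈ le n → Y ∈ ge (n + 1) → ∀ f : X ⟶ Y, f = 0
  decomp : ∀ (X : C) (k : ℤ), ∃ (A B : C) (x : A ⟶ X) (y : X ⟶ B) (δ : B ⟶ A⟦(1 : ℤ)⟧),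
    (Triangle.mk x y δ ∈ distTriang C) ∧ A ∈ le k ∧ B ∈ ge (k + 1)

variable {C}

/-- `(A, B, x, y)` is a `k`-weight decomposition of `X`. -/
def WeightStructure.IsWeightDecomp (w : WeightStructure C) (k : ℤ) {X : C} (A B : C)
    (x : A ⟶ X) (y : X ⟶ B) : Prop :=
  (∃ δ : B ⟶ A⟦(1 : ℤ)⟧, Triangle.mk x y δ ∈ distTriang C) ∧ A ∈ w.le k ∧ B ∈ w.ge (k + 1)

/-- `g : M ⟶ N` kills weights `m, …, n`. -/
def WeightStructure.KillsWeights (w : WeightStructure C) (m n : ℤ) {M N : C}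
    (g : M ⟶ N) : Prop :=
  ∃ (A A' B B' : C) (x : A ⟶ M) (x' : M ⟶ A') (y' : B ⟶ N) (y : N ⟶ B'),
    w.IsWeightDecomp n A A' x x' ∧ w.IsWeightDecomp (m - 1) B B' y' y ∧
      x ≫ g ≫ y = 0

/-- The class of objects of `C` without weights `m, …, n`. -/
def WeightStructure.without (w : WeightStructure C) (m n : ℤ) : Set C :=
  {M : C | w.KillsWeights m n (𝟙 M)}


/-- A `t`-structure on the triangulated category `C` (cohomological conventions,
with `le n = C_{t ≤ n}` and `ge n = C_{t ≥ n}`). -/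
structure TStructure (C : Type u) [Category.{v} C] [Preadditive C] [HasZeroObject C]
    [HasShift C ℤ] [∀ n : ℤ, (shiftFunctor C n).Additive] [Pretriangulated C] where
  le : ℤ → Set C
  ge : ℤ → Set C
  le_iso_closed : ∀ (n : ℤ) (X Y : C), (X ≅ Y) → X ∈ le n → Y ∈ le n
  ge_iso_closed : ∀ (n : ℤ) (X Y : C), (X ≅ Y) → X ∈ ge n → Y ∈ ge n
  le_shift : ∀ (n k : ℤ) (X : C), X ∈ le n → X⟦k⟧ ∈ le (n + k)
  ge_shift : ∀ (n k : ℤ) (X : C), X ∈ ge n → X⟦k⟧ ∈ ge (n + k)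
  le_mono : ∀ n : ℤ, le n ⊆ le (n + 1)
  ge_anti : ∀ n : ℤ, ge (n + 1) ⊆ ge n
  orth : ∀ (n : ℤ) (X Y : C), X ∈ ge (n + 1) → Y ∈ le n → ∀ f : X ⟶ Y, f = 0
  decomp : ∀ (X : C) (n : ℤ), ∃ (A B : C) (x : A ⟶ X) (y : X ⟶ B) (δ : B ⟶ A⟦(1 : ℤ)⟧),
    (Triangle.mk x y δ ∈ distTriang C) ∧ A ∈ ge (n + 1) ∧ B ∈ le n

section Aux

/-- monotonicity of the `le` classes of a weight structure -/
lemma WeightStructure.le_mono' (w : WeightStructure C) {k k' : ℤ} (h : k ≤ k') :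
    w.le k ⊆ w.le k' := by
  obtain ⟨d, rfl⟩ := Int.le.dest h
  clear h
  induction d with
  | zero => simpa using subset_rfl
  | succ d ih =>
      have : k + (d + 1 : ℕ) = (k + d) + 1 := by push_cast; ring
      rw [this]
      exact ih.trans (w.le_mono _)

/-- antitonicity of the `ge` classes of a weight structure -/
lemma WeightStructure.ge_anti' (w : WeightStructure C) {k k' : ℤ} (h : k ≤ k') :
    w.ge k' ⊆ w.ge k := by
  obtain ⟨d, rfl⟩ := Int.le.dest h
  clear h
  induction d with
  | zero => simpa using subset_rfl
  | succ d ih =>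
      have : k + (d + 1 : ℕ) = (k + d) + 1 := by push_cast; ring
      rw [this]
      exact (w.ge_anti _).trans ih

/-- antitonicity of the `ge` classes of a t-structure -/
lemma TStructure.ge_anti' (t : TStructure C) {k k' : ℤ} (h : k ≤ k') :
    t.ge k' ⊆ t.ge k := by
  obtain ⟨d, rfl⟩ := Int.le.dest h
  clear h
  induction d with
  | zero => simpa using subset_rfl
  | succ d ih =>
      have : k + (d + 1 : ℕ) = (k + d) + 1 := by push_cast; ring
      rw [this]
      exact (t.ge_anti _).trans ih

/-- adjacency in all degrees -/
lemma adj_ge (w : WeightStructure C) (t : TStructure C) (adj : w.ge 0 = t.ge 0) (k : ℤ) :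
    w.ge k = t.ge k := by
  ext X
  constructor
  · intro hX
    have h1 : X⟦-k⟧ ∈ w.ge 0 := by
      have := w.ge_shift k (-k) X hX
      rwa [add_neg_cancel k] at this
    rw [adj] at h1
    have h2 : (X⟦-k⟧)⟦k⟧ ∈ t.ge k := by
      have := t.ge_shift 0 k _ h1
      rwa [zero_add] at this
    exact t.ge_iso_closed k _ _ ((shiftFunctorCompIsoId C (-k) k (by ring)).app X) h2
  · intro hX
    have h1 : X⟦-k⟧ ∈ t.ge 0 := by
      have := t.ge_shift k (-k) X hX
      rwa [add_neg_cancel k] at this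
    rw [← adj] at h1
    have h2 : (X⟦-k⟧)⟦k⟧ ∈ w.ge k := by
      have := w.ge_shift 0 k _ h1
      rwa [zero_add] at this
    exact w.ge_iso_closed k _ _ ((shiftFunctorCompIsoId C (-k) k (by ring)).app X) h2

/-- the classes `t.ge k` are closed under extensions (this uses the retract axiom of the
adjacent weight structure). -/
lemma ge_ext (w : WeightStructure C) (t : TStructure C) (adj : w.ge 0 = t.ge 0) (k : ℤ)
    (T : Triangle C) (hT : T ∈ distTriang C) (h₁ : T.obj₁ ∈ t.ge k) (h₃ : T.obj₃ ∈ t.ge k) :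
    T.obj₂ ∈ t.ge k := by
  obtain ⟨A₀, B₀, x₀, y₀, δ₀, hD, hA₀, hB₀⟩ := t.decomp T.obj₂ (k - 1)
  rw [sub_add_cancel] at hA₀
  have hk : k - 1 + 1 = k := sub_add_cancel k 1
  have hy₁ : T.mor₁ ≫ y₀ = 0 := by
    apply t.orth (k - 1) _ _ _ hB₀
    rw [hk]; exact h₁
  obtain ⟨z, hz⟩ := Triangle.yoneda_exact₂ T hT y₀ hy₁
  have hz0 : z = 0 := by
    apply t.orth (k - 1) _ _ _ hB₀
    rw [hk]; exact h₃
  have hy₀ : y₀ = 0 := by rw [hz, hz0, comp_zero]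
  obtain ⟨s, hs⟩ := Triangle.coyoneda_exact₂ _ hD (𝟙 T.obj₂)
    (by change 𝟙 T.obj₂ ≫ y₀ = 0; rw [hy₀, comp_zero])
  rw [← adj_ge w t adj] at hA₀ ⊢
  exact w.ge_retract k _ _ s x₀ hs.symm hA₀

end Aux

/-- The explicit construction of the torsion decomposition: `L` is an extension
of `t_{≥ n+1}(w_{≥ m}M)` by `w_{≤ m-1}M`, hence without weights `m, …, n`, and
`R = t_{≤ n}(w_{≥ m}M) ∈ C[m, n]`. -/
theorem stmt14 (w : WeightStructure C) (t : TStructure C)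
    (adj : w.ge 0 = t.ge 0) (m n : ℤ) (hmn : m ≤ n) (M : C)
    (A W : C) (a : A ⟶ M) (p : M ⟶ W) (δ₁ : W ⟶ A⟦(1 : ℤ)⟧)
    (hT₁ : Triangle.mk a p δ₁ ∈ distTriang C) (hA : A ∈ w.le (m - 1))
    (hW : W ∈ w.ge m)
    (T R : C) (u : T ⟶ W) (q : W ⟶ R) (δ₂ : R ⟶ T⟦(1 : ℤ)⟧)
    (hT₂ : Triangle.mk u q δ₂ ∈ distTriang C) (hT : T ∈ t.ge (n + 1))
    (hR : R ∈ t.le n)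
    (L : C) (l : L ⟶ M) (δ₃ : R ⟶ L⟦(1 : ℤ)⟧)
    (hT₃ : Triangle.mk l (p ≫ q) δ₃ ∈ distTriang C) :
    (∃ (f : A ⟶ L) (g : L ⟶ T) (δ : T ⟶ A⟦(1 : ℤ)⟧),
      Triangle.mk f g δ ∈ distTriang C) ∧
    L ∈ w.without m n ∧ R ∈ t.le n ∩ t.ge m := by
  have hTw : T ∈ w.ge (n + 1) := by rw [adj_ge w t adj]; exact hT
  have main : ∃ (f : A ⟶ L) (g : L ⟶ T) (δ : T ⟶ A⟦(1 : ℤ)⟧),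
      Triangle.mk f g δ ∈ distTriang C := by
    -- zero composites coming from the three given distinguished triangles
    have hap : a ≫ p = 0 := comp_distTriang_mor_zero₁₂ _ hT₁
    have hpδ₁ : p ≫ δ₁ = 0 := comp_distTriang_mor_zero₂₃ _ hT₁
    have huq : u ≫ q = 0 := comp_distTriang_mor_zero₁₂ _ hT₂
    have hlh : l ≫ (p ≫ q) = 0 := comp_distTriang_mor_zero₁₂ _ hT₃
    -- Step 1: construct `f : A ⟶ L` with `f ≫ l = a` and `δ₁ ≫ f⟦1⟧' = q ≫ δ₃`
    obtain ⟨ω, hω₁, hω₂⟩ := complete_distinguished_triangle_morphism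
      (Triangle.mk a p δ₁).rotate (Triangle.mk l (p ≫ q) δ₃).rotate
      (rot_of_distTriang _ hT₁) (rot_of_distTriang _ hT₃) (𝟙 M) q
      (by exact (Category.id_comp _).symm)
    change (shiftFunctor C (1 : ℤ)).obj A ⟶ (shiftFunctor C (1 : ℤ)).obj L at ω
    change δ₁ ≫ ω = q ≫ δ₃ at hω₁
    change (-(shiftFunctor C (1 : ℤ)).map a) ≫ (shiftFunctor C (1 : ℤ)).map (𝟙 M) =
      ω ≫ (-(shiftFunctor C (1 : ℤ)).map l) at hω₂
    simp only [CategoryTheory.Functor.map_id, Category.comp_id, Preadditive.neg_comp, Preadditive.comp_neg, neg_inj] at hω₂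
    -- hω₁ : δ₁ ≫ ω = q ≫ δ₃,  hω₂ : a⟦1⟧' = ω ≫ l⟦1⟧' (after simplification)
    set f : A ⟶ L := (shiftFunctor C (1 : ℤ)).preimage ω with hfdef
    have hfω : f⟦1⟧' = ω := (shiftFunctor C (1 : ℤ)).map_preimage ω
    have hfl : f ≫ l = a := by
      apply (shiftFunctor C (1 : ℤ)).map_injective
      rw [CategoryTheory.Functor.map_comp, hfω, ← hω₂]
    have hqδ₃ : q ≫ δ₃ = δ₁ ≫ f⟦1⟧' := by rw [hfω, hω₁]
    -- Step 2: complete `f` to a distinguished triangle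
    obtain ⟨Q, g₀, δ₀, hQ⟩ := distinguished_cocone_triangle f
    have hfg₀ : f ≫ g₀ = 0 := comp_distTriang_mor_zero₁₂ _ hQ
    have hg₀δ₀ : g₀ ≫ δ₀ = 0 := comp_distTriang_mor_zero₂₃ _ hQ
    have hδ₀f : δ₀ ≫ f⟦1⟧' = 0 := comp_distTriang_mor_zero₃₁ _ hQ
    -- Step 3: the comparison morphism `c : Q ⟶ W`
    obtain ⟨c, hc₁, hc₂⟩ := complete_distinguished_triangle_morphism
      (Triangle.mk f g₀ δ₀) (Triangle.mk a p δ₁) hQ hT₁ (𝟙 A) l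
      (by change f ≫ l = 𝟙 A ≫ a; rw [Category.id_comp, hfl])
    change Q ⟶ W at c
    change g₀ ≫ c = l ≫ p at hc₁
    change δ₀ ≫ (shiftFunctor C (1 : ℤ)).map (𝟙 A) = c ≫ δ₁ at hc₂
    simp only [CategoryTheory.Functor.map_id, Category.comp_id] at hc₂
    -- hc₁ : g₀ ≫ c = l ≫ p,  hc₂ : δ₀ = c ≫ δ₁
    -- Step 4: a first factorization `c - μ₀ ≫ p = φ₀ ≫ u`
    have hcq3 : (c ≫ q) ≫ δ₃ = 0 := by
      rw [Category.assoc, hqδ₃, ← Category.assoc, ← hc₂, hδ₀f]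
    obtain ⟨μ₀, hμ₀⟩ := Triangle.coyoneda_exact₃ _ hT₃ (c ≫ q) hcq3
    change Q ⟶ M at μ₀
    change c ≫ q = μ₀ ≫ (p ≫ q) at hμ₀
    obtain ⟨φ₀, hφ₀⟩ := Triangle.coyoneda_exact₂ _ hT₂ (c - μ₀ ≫ p)
      (by change (c - μ₀ ≫ p) ≫ q = 0; rw [Preadditive.sub_comp, Category.assoc, ← hμ₀, sub_self])
    change Q ⟶ T at φ₀
    change c - μ₀ ≫ p = φ₀ ≫ u at hφ₀
    -- Step 5: `Q ∈ w.ge (n+1)`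
    obtain ⟨P, P', iP, jP, δP, hDP, hP, hP'⟩ := w.decomp Q n
    obtain ⟨A₁, B₁, x₁, y₁, δL, hDL, hA₁, hB₁⟩ := w.decomp L n
    -- `x₁ ≫ g₀ = 0`
    have hx₁g₀ : x₁ ≫ g₀ = 0 := by
      have e1 : (x₁ ≫ (l ≫ p)) ≫ q = 0 := by
        rw [Category.assoc, Category.assoc, hlh, comp_zero]
      obtain ⟨xh, hxh⟩ := Triangle.coyoneda_exact₂ _ hT₂ (x₁ ≫ (l ≫ p)) e1
      change A₁ ⟶ T at xh
      change x₁ ≫ (l ≫ p) = xh ≫ u at hxh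
      have hxh0 : xh = 0 := w.orth n A₁ T hA₁ hTw xh
      have e2 : x₁ ≫ (l ≫ p) = 0 := by rw [hxh, hxh0, zero_comp]
      obtain ⟨κ, hκ⟩ := Triangle.coyoneda_exact₂ _ hT₁ (x₁ ≫ l)
        (by change (x₁ ≫ l) ≫ p = 0; rw [Category.assoc]; exact e2)
      change A₁ ⟶ A at κ
      change x₁ ≫ l = κ ≫ a at hκ
      have e3 : (x₁ - κ ≫ f) ≫ l = 0 := by
        rw [Preadditive.sub_comp, Category.assoc, hfl, hκ, sub_self]
      obtain ⟨j₁, hj₁⟩ := Triangle.coyoneda_exact₂ _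
        (rot_of_distTriang _ (rot_of_distTriang _ hT₃)) ((x₁ - κ ≫ f)⟦(1 : ℤ)⟧')
        (by change (shiftFunctor C (1 : ℤ)).map (x₁ - κ ≫ f) ≫ (-(shiftFunctor C (1 : ℤ)).map l) = 0; rw [Preadditive.comp_neg, ← CategoryTheory.Functor.map_comp, e3, CategoryTheory.Functor.map_zero, neg_zero])
      change A₁⟦(1 : ℤ)⟧ ⟶ R at j₁
      change (shiftFunctor C (1 : ℤ)).map (x₁ - κ ≫ f) = j₁ ≫ δ₃ at hj₁
      have hj₁δ₂ : j₁ ≫ δ₂ = 0 :=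
        w.orth (n + 1) (A₁⟦(1 : ℤ)⟧) (T⟦(1 : ℤ)⟧)
          (w.le_shift n 1 A₁ hA₁) (w.ge_shift (n + 1) 1 T hTw) (j₁ ≫ δ₂)
      obtain ⟨j₂, hj₂⟩ := Triangle.coyoneda_exact₃ _ hT₂ j₁ hj₁δ₂
      change A₁⟦(1 : ℤ)⟧ ⟶ W at j₂
      change j₁ = j₂ ≫ q at hj₂
      apply (shiftFunctor C (1 : ℤ)).map_injective
      rw [CategoryTheory.Functor.map_comp, CategoryTheory.Functor.map_zero]
      have hx₁1 : x₁⟦(1 : ℤ)⟧' = j₂ ≫ q ≫ δ₃ + (κ ≫ f)⟦(1 : ℤ)⟧' := by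
        rw [← Category.assoc, ← hj₂, ← hj₁, CategoryTheory.Functor.map_sub, sub_add_cancel]
      have t1 : (j₂ ≫ q ≫ δ₃) ≫ (shiftFunctor C (1 : ℤ)).map g₀ = 0 := by
        rw [hqδ₃, Category.assoc, Category.assoc, ← CategoryTheory.Functor.map_comp,
          hfg₀, CategoryTheory.Functor.map_zero, comp_zero, comp_zero]
      have t2 : ((κ ≫ f)⟦(1 : ℤ)⟧') ≫ (shiftFunctor C (1 : ℤ)).map g₀ = 0 := by
        rw [← CategoryTheory.Functor.map_comp, Category.assoc, hfg₀, comp_zero,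
          CategoryTheory.Functor.map_zero]
      rw [hx₁1, Preadditive.add_comp, t1, t2, add_zero]
    -- `iP = 0`
    have hiφ₀ : iP ≫ φ₀ = 0 := w.orth n P T hP hTw _
    have hiδ₀ : iP ≫ δ₀ = 0 := by
      have h11 : iP ≫ c = (iP ≫ μ₀) ≫ p := by
        have h12 : iP ≫ (c - μ₀ ≫ p) = 0 := by
          rw [hφ₀, ← Category.assoc, hiφ₀, zero_comp]
        rw [Preadditive.comp_sub] at h12
        rw [Category.assoc]
        exact sub_eq_zero.mp h12
      rw [hc₂, ← Category.assoc, h11, Category.assoc, hpδ₁, comp_zero]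
    obtain ⟨lam₀, hlam₀⟩ := Triangle.coyoneda_exact₂ _ (rot_of_distTriang _ hQ) iP
      (by change iP ≫ δ₀ = 0; exact hiδ₀)
    change P ⟶ L at lam₀
    change iP = lam₀ ≫ g₀ at hlam₀
    have hlamy : lam₀ ≫ y₁ = 0 := w.orth n P B₁ hP hB₁ _
    obtain ⟨lam₁, hlam₁⟩ := Triangle.coyoneda_exact₂ _ hDL lam₀ (by change lam₀ ≫ y₁ = 0; exact hlamy)
    change P ⟶ A₁ at lam₁
    change lam₀ = lam₁ ≫ x₁ at hlam₁
    have hiP : iP = 0 := by rw [hlam₀, hlam₁, Category.assoc, hx₁g₀, comp_zero]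
    obtain ⟨s, hs⟩ := Triangle.yoneda_exact₂ _ hDP (𝟙 Q)
      (by change iP ≫ 𝟙 Q = 0; rw [hiP, zero_comp])
    change P' ⟶ Q at s
    change 𝟙 Q = jP ≫ s at hs
    have hQw : Q ∈ w.ge (n + 1) := w.ge_retract (n + 1) Q P' jP s hs.symm hP'
    have hQt : Q ∈ t.ge (n + 1) := by rw [← adj_ge w t adj]; exact hQw
    -- Step 6: now `c ≫ q = 0`, giving the factorization `c = φ ≫ u`
    have hcq : c ≫ q = 0 := t.orth n Q R hQt hR _
    obtain ⟨φ, hφ⟩ := Triangle.coyoneda_exact₂ _ hT₂ c (by change c ≫ q = 0; exact hcq)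
    change Q ⟶ T at φ
    change c = φ ≫ u at hφ
    have hclose : φ ≫ (u ≫ δ₁) = δ₀ := by rw [← Category.assoc, ← hφ, hc₂]
    -- Step 7: the inverse `ξ`
    obtain ⟨ξ₀, hξ₀⟩ := Triangle.coyoneda_exact₃ _ (rot_of_distTriang _ hQ) (u ≫ δ₁)
      (by change (u ≫ δ₁) ≫ (-(shiftFunctor C (1 : ℤ)).map f) = 0
          rw [Preadditive.comp_neg, Category.assoc, ← hqδ₃, ← Category.assoc, huq, zero_comp, neg_zero])
    change T ⟶ Q at ξ₀
    change u ≫ δ₁ = ξ₀ ≫ δ₀ at hξ₀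
    -- hξ₀ : u ≫ δ₁ = ξ₀ ≫ δ₀
    obtain ⟨μ₂, hμ₂⟩ := Triangle.coyoneda_exact₃ _ hT₁ (ξ₀ ≫ c - u)
      (by change (ξ₀ ≫ c - u) ≫ δ₁ = 0; rw [Preadditive.sub_comp, Category.assoc, ← hc₂, ← hξ₀, sub_self])
    change T ⟶ M at μ₂
    change ξ₀ ≫ c - u = μ₂ ≫ p at hμ₂
    obtain ⟨ν₂, hν₂⟩ := Triangle.coyoneda_exact₂ _ hT₃ μ₂
      (by change μ₂ ≫ (p ≫ q) = 0
          have e7 : (ξ₀ ≫ c - u) ≫ q = 0 := by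
            rw [Preadditive.sub_comp, Category.assoc, hcq, comp_zero, huq, sub_self]
          rw [hμ₂] at e7
          rwa [Category.assoc] at e7)
    change T ⟶ L at ν₂
    change μ₂ = ν₂ ≫ l at hν₂
    have hξc : (ξ₀ - ν₂ ≫ g₀) ≫ c = u := by
      rw [Preadditive.sub_comp, Category.assoc, hc₁, ← Category.assoc, ← hν₂, ← hμ₂,
        sub_sub_cancel]
    have hξδ₀ : (ξ₀ - ν₂ ≫ g₀) ≫ δ₀ = u ≫ δ₁ := by
      rw [Preadditive.sub_comp, ← hξ₀, Category.assoc, hg₀δ₀, comp_zero, sub_zero]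
    -- Step 8: `ξ ≫ φ = 𝟙 T`
    have hχ : (ξ₀ - ν₂ ≫ g₀) ≫ φ = 𝟙 T := by
      have e8 : ((ξ₀ - ν₂ ≫ g₀) ≫ φ - 𝟙 T) ≫ u = 0 := by
        rw [Preadditive.sub_comp, Category.assoc, ← hφ, hξc, Category.id_comp, sub_self]
      obtain ⟨j₃, hj₃⟩ := Triangle.coyoneda_exact₂ _
        (rot_of_distTriang _ (rot_of_distTriang _ hT₂))
        (((ξ₀ - ν₂ ≫ g₀) ≫ φ - 𝟙 T)⟦(1 : ℤ)⟧')
        (by change (shiftFunctor C (1 : ℤ)).map ((ξ₀ - ν₂ ≫ g₀) ≫ φ - 𝟙 T) ≫ (-(shiftFunctor C (1 : ℤ)).map u) = 0; rw [Preadditive.comp_neg, ← CategoryTheory.Functor.map_comp, e8, CategoryTheory.Functor.map_zero, neg_zero])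
      change T⟦(1 : ℤ)⟧ ⟶ R at j₃
      change (shiftFunctor C (1 : ℤ)).map ((ξ₀ - ν₂ ≫ g₀) ≫ φ - 𝟙 T) = j₃ ≫ δ₂ at hj₃
      have hj₃0 : j₃ = 0 := by
        have h1 := t.ge_shift (n + 1) 1 T hT
        exact t.orth n (T⟦(1 : ℤ)⟧) R
          (t.ge_anti' (by omega : n + 1 ≤ n + 1 + 1) h1) hR j₃
      have : ((ξ₀ - ν₂ ≫ g₀) ≫ φ - 𝟙 T)⟦(1 : ℤ)⟧' = 0 := by
        rw [hj₃, hj₃0, zero_comp]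
      have h0 := (shiftFunctor C (1 : ℤ)).map_injective
        (by rw [this, CategoryTheory.Functor.map_zero] :
          ((ξ₀ - ν₂ ≫ g₀) ≫ φ - 𝟙 T)⟦(1 : ℤ)⟧' = (0 : T ⟶ T)⟦(1 : ℤ)⟧')
      exact sub_eq_zero.mp h0
    -- Step 9: `φ ≫ ξ = 𝟙 Q`
    have hSig : φ ≫ (ξ₀ - ν₂ ≫ g₀) = 𝟙 Q := by
      have e9 : (φ ≫ (ξ₀ - ν₂ ≫ g₀) - 𝟙 Q) ≫ δ₀ = 0 := by
        rw [Preadditive.sub_comp, Category.assoc, hξδ₀, hclose, Category.id_comp, sub_self]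
      obtain ⟨σ, hσ⟩ := Triangle.coyoneda_exact₂ _ (rot_of_distTriang _ hQ)
        (φ ≫ (ξ₀ - ν₂ ≫ g₀) - 𝟙 Q) (by change (φ ≫ (ξ₀ - ν₂ ≫ g₀) - 𝟙 Q) ≫ δ₀ = 0; exact e9)
      change Q ⟶ L at σ
      change φ ≫ (ξ₀ - ν₂ ≫ g₀) - 𝟙 Q = σ ≫ g₀ at hσ
      have e10 : (σ ≫ l) ≫ p = 0 := by
        have h13 : (φ ≫ (ξ₀ - ν₂ ≫ g₀) - 𝟙 Q) ≫ c = 0 := by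
          rw [Preadditive.sub_comp, Category.assoc, hξc, ← hφ, Category.id_comp, sub_self]
        rw [hσ] at h13
        rw [Category.assoc, ← hc₁, ← Category.assoc]
        exact h13
      obtain ⟨κ₆, hκ₆⟩ := Triangle.coyoneda_exact₂ _ hT₁ (σ ≫ l) (by change (σ ≫ l) ≫ p = 0; exact e10)
      change Q ⟶ A at κ₆
      change σ ≫ l = κ₆ ≫ a at hκ₆
      have e11 : (σ - κ₆ ≫ f) ≫ l = 0 := by
        rw [Preadditive.sub_comp, Category.assoc, hfl, hκ₆, sub_self]
      obtain ⟨j₄, hj₄⟩ := Triangle.coyoneda_exact₂ _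
        (rot_of_distTriang _ (rot_of_distTriang _ hT₃)) ((σ - κ₆ ≫ f)⟦(1 : ℤ)⟧')
        (by change (shiftFunctor C (1 : ℤ)).map (σ - κ₆ ≫ f) ≫ (-(shiftFunctor C (1 : ℤ)).map l) = 0; rw [Preadditive.comp_neg, ← CategoryTheory.Functor.map_comp, e11, CategoryTheory.Functor.map_zero, neg_zero])
      change Q⟦(1 : ℤ)⟧ ⟶ R at j₄
      change (shiftFunctor C (1 : ℤ)).map (σ - κ₆ ≫ f) = j₄ ≫ δ₃ at hj₄
      have hj₄0 : j₄ = 0 := by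
        have h1 := t.ge_shift (n + 1) 1 Q hQt
        exact t.orth n (Q⟦(1 : ℤ)⟧) R
          (t.ge_anti' (by omega : n + 1 ≤ n + 1 + 1) h1) hR j₄
      have hσκ : σ = κ₆ ≫ f := by
        have : (σ - κ₆ ≫ f)⟦(1 : ℤ)⟧' = 0 := by rw [hj₄, hj₄0, zero_comp]
        have h0 := (shiftFunctor C (1 : ℤ)).map_injective
          (by rw [this, CategoryTheory.Functor.map_zero] :
            (σ - κ₆ ≫ f)⟦(1 : ℤ)⟧' = (0 : Q ⟶ L)⟦(1 : ℤ)⟧')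
        exact sub_eq_zero.mp h0
      have : φ ≫ (ξ₀ - ν₂ ≫ g₀) - 𝟙 Q = 0 := by
        rw [hσ, hσκ, Category.assoc, hfg₀, comp_zero]
      exact sub_eq_zero.mp this
    -- Step 10: `φ` is an isomorphism and the triangle `(f, g₀ ≫ φ, u ≫ δ₁)` is distinguished
    have hφiso : IsIso φ := ⟨ξ₀ - ν₂ ≫ g₀, hSig, hχ⟩
    refine ⟨f, g₀ ≫ φ, u ≫ δ₁, ?_⟩
    refine isomorphic_distinguished _ hQ _ ?_
    refine Triangle.isoMk _ _ (Iso.refl A) (Iso.refl L) (asIso φ).symm ?_ ?_ ?_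
    · change f ≫ 𝟙 L = 𝟙 A ≫ f; rw [Category.id_comp, Category.comp_id]
    · change (g₀ ≫ φ) ≫ inv φ = 𝟙 L ≫ g₀; rw [Category.id_comp, Category.assoc, IsIso.hom_inv_id, Category.comp_id]
    · change (u ≫ δ₁) ≫ (shiftFunctor C (1 : ℤ)).map (𝟙 A) = inv φ ≫ δ₀
      rw [CategoryTheory.Functor.map_id, Category.comp_id, ← hclose, ← Category.assoc,
        IsIso.inv_hom_id, Category.id_comp]
  obtain ⟨f, g, δ, hfg⟩ := main
  refine ⟨⟨f, g, δ, hfg⟩, ?_, hR, ?_⟩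
  · -- `L` is without weights `m, …, n`
    have hfg0 : f ≫ 𝟙 L ≫ g = 0 := by
      rw [Category.id_comp]
      exact comp_distTriang_mor_zero₁₂ _ hfg
    exact ⟨A, T, A, T, f, g, f, g,
      ⟨⟨δ, hfg⟩, w.le_mono' (by omega) hA, hTw⟩,
      ⟨⟨δ, hfg⟩, hA, w.ge_anti' (by omega) hTw⟩, hfg0⟩
  · -- `R ∈ t.ge m`
    have hW' : W ∈ t.ge m := by rw [← adj_ge w t adj]; exact hW
    have hT1 : T⟦(1 : ℤ)⟧ ∈ t.ge m := by
      refine t.ge_anti' (show m ≤ n + 1 + 1 by omega) ?_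
      exact t.ge_shift (n + 1) 1 T hT
    exact ge_ext w t adj m _ (rot_of_distTriang _ hT₂) hW' hT1
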